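/- Let G be a group acting by isometries on a metric space X, acting discretely in the sense that for every x ∈ X and every bounded Σ ⊆ X the set {γ : γ·x ∈ Σ} is finite. Suppose every ball of radius 4 in X can be covered by K balls of radius 1. Then for every x ∈ X, the set S₂(x) := {γ : d(γ·x, x) ≤ 2} satisfies |S₂(x)·S₂(x)| ≤ K·|S₂(x)|. -/

import Mathlib

open Pointwise

theorem almost_stabiliser_doubling {Γ X : Type*} [Group Γ] [MetricSpace X] [MulAction Γ X]
    (hiso : ∀ γ : Γ, Isometry fun x : X => γ • x)
    (hdisc : ∀ (x : X) (B : Set X), Bornology.IsBounded B → {γ : Γ | γ • x ∈ B}.Finite)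
    (K : ℕ)
    (hpack : ∀ x : X, ∃ T : Finset X, T.card ≤ K ∧
      Metric.closedBall x 4 ⊆ ⋃ y ∈ T, Metric.closedBall y 1)
    (x : X) :
    ({γ : Γ | dist (γ • x) x ≤ 2} * {γ : Γ | dist (γ • x) x ≤ 2}).ncard
      ≤ K * {γ : Γ | dist (γ • x) x ≤ 2}.ncard := by
  classical
  set S2 : Set Γ := {γ : Γ | dist (γ • x) x ≤ 2} with hS2def
  have hS2fin : S2.Finite := by
    have := hdisc x (Metric.closedBall x 2) Metric.isBounded_closedBall
    convert this using 1
    ext; simp [Metric.mem_closedBall, hS2def]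
  have hS4fin : {γ : Γ | dist (γ • x) x ≤ 4}.Finite := by
    have := hdisc x (Metric.closedBall x 4) Metric.isBounded_closedBall
    convert this using 1
    ext; simp [Metric.mem_closedBall]
  have hsub : S2 * S2 ⊆ {γ : Γ | dist (γ • x) x ≤ 4} := by
    rintro γ ⟨a, ha, b, hb, rfl⟩
    have h1 : dist ((a * b) • x) (a • x) = dist (b • x) x := by
      rw [mul_smul]; exact (hiso a).dist_eq _ _
    calc dist ((a * b) • x) x ≤ dist ((a * b) • x) (a • x) + dist (a • x) x :=
          dist_triangle _ _ _
      _ ≤ 2 + 2 := by rw [h1]; exact add_le_add hb ha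
      _ = 4 := by norm_num
  obtain ⟨T, hTcard, hTcov⟩ := hpack x
  let g : X → Γ := fun y =>
    if h : ∃ γ : Γ, γ • x ∈ Metric.closedBall y 1 then h.choose else 1
  let S2' : Finset Γ := hS2fin.toFinset
  let S4' : Finset Γ := hS4fin.toFinset
  let F : X → Finset Γ := fun y => S2'.image (fun γ => g y * γ)
  have hcover : S4' ⊆ T.biUnion F := by
    intro γ hγ
    have hγ4 : dist (γ • x) x ≤ 4 := by simpa [S4'] using hγ
    have : γ • x ∈ Metric.closedBall x 4 := by simpa [Metric.mem_closedBall]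
    obtain ⟨y, hyT, hy⟩ := by
      have := hTcov this
      simpa using this
    have hex : ∃ δ : Γ, δ • x ∈ Metric.closedBall y 1 := ⟨γ, hy⟩
    have hgy : g y • x ∈ Metric.closedBall y 1 := by
      simp only [g, dif_pos hex]; exact hex.choose_spec
    have hdist : dist (γ • x) (g y • x) ≤ 2 := by
      calc dist (γ • x) (g y • x) ≤ dist (γ • x) y + dist y (g y • x) := dist_triangle _ _ _
        _ ≤ 1 + 1 := add_le_add (Metric.mem_closedBall.1 hy)
            (by rw [dist_comm]; exact Metric.mem_closedBall.1 hgy)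
        _ = 2 := by norm_num
    have hmem : (g y)⁻¹ * γ ∈ S2' := by
      have : dist (((g y)⁻¹ * γ) • x) x = dist (γ • x) (g y • x) := by
        have := (hiso (g y)).dist_eq (((g y)⁻¹ * γ) • x) x
        simpa [← mul_smul] using this.symm
      simp only [S2', Set.Finite.mem_toFinset, hS2def, Set.mem_setOf_eq]
      rw [this]; exact hdist
    refine Finset.mem_biUnion.2 ⟨y, hyT, Finset.mem_image.2 ⟨(g y)⁻¹ * γ, hmem, by group⟩⟩
  have hFcard : ∀ y, (F y).card ≤ S2'.card := fun y => Finset.card_image_le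
  have h1 : (S2 * S2).ncard ≤ S4'.card := by
    rw [← Set.ncard_coe_finset]
    exact Set.ncard_le_ncard (by simpa [S4'] using hsub)
      (by simp only [S4', Set.Finite.coe_toFinset]; exact hS4fin)
  have h2 : S4'.card ≤ (T.biUnion F).card := Finset.card_le_card hcover
  have h3 : (T.biUnion F).card ≤ T.card * S2'.card := by
    calc (T.biUnion F).card ≤ ∑ y ∈ T, (F y).card := Finset.card_biUnion_le
      _ ≤ ∑ _y ∈ T, S2'.card := Finset.sum_le_sum fun y _ => hFcard y
      _ = T.card * S2'.card := by rw [Finset.sum_const, smul_eq_mul]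
  have hS2card : S2'.card = S2.ncard := by
    rw [← Set.ncard_coe_finset]; simp [S2']
  calc (S2 * S2).ncard ≤ T.card * S2'.card := le_trans h1 (le_trans h2 h3)
    _ ≤ K * S2.ncard := by rw [hS2card]; exact Nat.mul_le_mul_right _ hTcard
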